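/- arXiv:1608.07390 — 2 statements merged into one kernel-verified Lean document; each statement's English description precedes it below -/
import Mathlib

section
/- Let G be a non-trivial graph and n ≥ 1. Then n · |Ext(G)| ≤ tn(G ∘ K_n) ≤ n · tn(G), where Ext(G) is the set of extreme vertices of G with respect to toll convexity. -/
open SimpleGraph

/-- A walk `W` between `u` and `v` is a *tolled walk* if either `u = v` and `W` is trivial,
or `u` and `v` are adjacent and `W` is the single-edge walk, or `u ≠ v` are non-adjacent,
`W` has at least one interior vertex, `u` is adjacent exactly to the interior vertex
at position 1 and `v` exactly to the interior vertex at position `W.length - 1`. -/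
def IsTolledWalk {V : Type*} (G : SimpleGraph V) {u v : V} (W : G.Walk u v) : Prop :=
  (u = v ∧ W.length = 0) ∨
  (G.Adj u v ∧ W.support = [u, v]) ∨
  (¬ G.Adj u v ∧ u ≠ v ∧ 2 ≤ W.length ∧
    (∀ i, 0 < i → i < W.length → (G.Adj u (W.support.getD i u) ↔ i = 1)) ∧
    (∀ i, 0 < i → i < W.length → (G.Adj v (W.support.getD i u) ↔ i = W.length - 1)))

/-- The toll interval between `u` and `v`: vertices lying on some tolled walk. -/
def tollInterval {V : Type*} (G : SimpleGraph V) (u v : V) : Set V :=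
  {x | ∃ W : G.Walk u v, IsTolledWalk G W ∧ x ∈ W.support}

/-- A toll set: the toll intervals between its pairs cover the vertex set. -/
def IsTollSet {V : Type*} (G : SimpleGraph V) (S : Set V) : Prop :=
  ∀ x : V, ∃ u ∈ S, ∃ v ∈ S, x ∈ tollInterval G u v

/-- The toll number: minimum size of a toll set. -/
noncomputable def tollNumber {V : Type*} (G : SimpleGraph V) : ℕ :=
  sInf {n | ∃ S : Set V, S.Finite ∧ S.ncard = n ∧ IsTollSet G S}

/-- `v` is a cut vertex if deleting it disconnects the graph. -/
def IsCutVertex {V : Type*} (G : SimpleGraph V) (v : V) : Prop :=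
  ¬ (G.induce {w | w ≠ v}).Preconnected

/-- The extreme vertices of `G` with respect to toll convexity. -/
def extremeVertices {V : Type*} (G : SimpleGraph V) : Set V :=
  {s | ∀ x y : V, x ≠ s → y ≠ s → s ∉ tollInterval G x y}

/-- The lexicographic product of simple graphs. -/
def lexProd {V W : Type*} (G : SimpleGraph V) (H : SimpleGraph W) : SimpleGraph (V × W) where
  Adj a b := G.Adj a.1 b.1 ∨ (a.1 = b.1 ∧ H.Adj a.2 b.2)
  symm := ⟨by
    rintro a b (h | ⟨h1, h2⟩)
    · exact Or.inl h.symm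
    · exact Or.inr ⟨h1.symm, h2.symm⟩⟩
  loopless := ⟨by
    rintro a (h | ⟨_, h⟩)
    · exact G.irrefl h
    · exact H.irrefl h⟩

section TollAux

variable {V : Type*} {G : SimpleGraph V} {n : ℕ}

lemma adjP {a b : V × Fin n} :
    (lexProd G (⊤ : SimpleGraph (Fin n))).Adj a b ↔
      G.Adj a.1 b.1 ∨ (a.1 = b.1 ∧ a.2 ≠ b.2) :=
  or_congr Iff.rfl (and_congr Iff.rfl (top_adj _ _))

lemma support_getD_eq_getVert {u v : V} (W : G.Walk u v) (d : V) :
    ∀ i, i ≤ W.length → W.support.getD i d = W.getVert i := by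
  induction W with
  | nil =>
    intro i hi
    simp only [Walk.length_nil, Nat.le_zero] at hi
    subst hi; simp
  | cons h W ih =>
    intro i hi
    cases i with
    | zero => simp
    | succ i =>
      rw [Walk.support_cons, List.getD_cons_succ, Walk.getVert_cons_succ]
      exact ih i (by simpa using hi)

lemma two_le_length {α : Type*} {H : SimpleGraph α} {u v : α} (hne : u ≠ v)
    (hadj : ¬ H.Adj u v) (W : H.Walk u v) : 2 ≤ W.length := by
  match W with
  | .nil => exact absurd rfl hne
  | .cons h .nil => exact absurd h hadj
  | .cons _ (.cons _ _) => simp [Walk.length_cons]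

lemma getElem_mem_tail_tail {α : Type*} (l : List α) (q : ℕ) (hq : q < l.length)
    (h2 : 2 ≤ q) : l[q] ∈ l.tail.tail := by
  match l, q with
  | a :: b :: r, (q + 2) =>
    simpa using List.getElem_mem (l := r) (i := q) (h := by simpa using hq)
  | [], q => simp at hq
  | [a], q => simp at hq; omega

lemma mem_tail_tail {α : Type*} {l : List α} {z : α} (h : z ∈ l.tail.tail) :
    ∃ q, ∃ hq : q < l.length, 2 ≤ q ∧ l[q] = z := by
  match l with
  | [] => simp at h
  | [a] => simp at h
  | a :: b :: r =>
    obtain ⟨q, hq, rfl⟩ := List.mem_iff_getElem.mp (by simpa using h)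
    exact ⟨q + 2, by simpa using hq, by omega, by simp⟩

end TollAux

section TollProj

variable {V : Type*} {G : SimpleGraph V} {n : ℕ}

open Classical in
noncomputable def projW (G : SimpleGraph V) {n : ℕ} :
    ∀ {a b : V × Fin n}, (lexProd G (⊤ : SimpleGraph (Fin n))).Walk a b → G.Walk a.1 b.1
  | _, _, .nil => Walk.nil
  | _, _, @Walk.cons _ _ a c b h W =>
    if hc : a.1 = c.1 then (projW G W).copy hc.symm rfl
    else Walk.cons ((adjP.mp h).resolve_right fun hh => hc hh.1) (projW G W)

lemma mem_projW_of_mem {a b : V × Fin n}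
    (W : (lexProd G (⊤ : SimpleGraph (Fin n))).Walk a b) :
    ∀ x ∈ W.support, x.1 ∈ (projW G W).support := by
  induction W with
  | nil => intro x hx; simp at hx; simp [projW, hx]
  | @cons a c b h W ih =>
    intro x hx
    rw [Walk.support_cons, List.mem_cons] at hx
    by_cases hc : a.1 = c.1
    · simp only [projW, dif_pos hc, Walk.support_copy]
      rcases hx with rfl | hx
      · rw [hc]; exact Walk.start_mem_support _
      · exact ih x hx
    · simp only [projW, dif_neg hc, Walk.support_cons, List.mem_cons]
      rcases hx with rfl | hx
      · exact Or.inl rfl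
      · exact Or.inr (ih x hx)

lemma projW_support_sub {a b : V × Fin n}
    (W : (lexProd G (⊤ : SimpleGraph (Fin n))).Walk a b) :
    ∀ y ∈ (projW G W).support, ∃ m, (y, m) ∈ W.support := by
  induction W with
  | nil =>
    rename_i a0
    intro y hy
    simp only [projW, Walk.support_nil, List.mem_singleton] at hy
    subst hy
    exact ⟨a0.2, by simp⟩
  | @cons a c b h W ih =>
    intro y hy
    by_cases hc : a.1 = c.1
    · simp only [projW, dif_pos hc, Walk.support_copy] at hy
      obtain ⟨m, hm⟩ := ih y hy
      exact ⟨m, by simp [Walk.support_cons, hm]⟩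
    · simp only [projW, dif_neg hc, Walk.support_cons, List.mem_cons] at hy
      rcases hy with rfl | hy
      · exact ⟨a.2, by simp [Walk.support_cons]⟩
      · obtain ⟨m, hm⟩ := ih y hy
        exact ⟨m, by simp [Walk.support_cons, hm]⟩

lemma projW_support_tail {a b : V × Fin n}
    (W : (lexProd G (⊤ : SimpleGraph (Fin n))).Walk a b) :
    ∀ y ∈ (projW G W).support.tail, ∃ m, (y, m) ∈ W.support.tail := by
  induction W with
  | nil => intro y hy; simp [projW] at hy
  | @cons a c b h W ih =>
    intro y hy
    rw [Walk.support_cons, List.tail_cons]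
    by_cases hc : a.1 = c.1
    · simp only [projW, dif_pos hc, Walk.support_copy] at hy
      obtain ⟨m, hm⟩ := ih y hy
      exact ⟨m, List.mem_of_mem_tail hm⟩
    · simp only [projW, dif_neg hc, Walk.support_cons, List.tail_cons] at hy
      exact projW_support_sub W y hy

lemma projW_support_tail_tail {a b : V × Fin n}
    (W : (lexProd G (⊤ : SimpleGraph (Fin n))).Walk a b) :
    ∀ y ∈ (projW G W).support.tail.tail, ∃ m, (y, m) ∈ W.support.tail.tail := by
  induction W with
  | nil => intro y hy; simp [projW] at hy
  | @cons a c b h W ih =>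
    intro y hy
    rw [Walk.support_cons, List.tail_cons]
    by_cases hc : a.1 = c.1
    · simp only [projW, dif_pos hc, Walk.support_copy] at hy
      obtain ⟨m, hm⟩ := ih y hy
      exact ⟨m, List.mem_of_mem_tail hm⟩
    · simp only [projW, dif_neg hc, Walk.support_cons, List.tail_cons] at hy
      exact projW_support_tail W y hy

lemma projW_append {a b c : V × Fin n}
    (P : (lexProd G (⊤ : SimpleGraph (Fin n))).Walk a b)
    (Q : (lexProd G (⊤ : SimpleGraph (Fin n))).Walk b c) :
    projW G (P.append Q) = (projW G P).append (projW G Q) := by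
  induction P with
  | nil => simp [projW]
  | @cons a c' b h P ih =>
    rw [Walk.cons_append]
    by_cases hc : a.1 = c'.1
    · obtain ⟨a1, a2⟩ := a; obtain ⟨c1, c2⟩ := c'
      simp only at hc; subst hc
      simp only [projW, dif_pos rfl, ih, Walk.copy_rfl_rfl, dite_true]
    · simp only [projW, dif_neg hc, ih, Walk.cons_append]

lemma projW_reverse {a b : V × Fin n}
    (W : (lexProd G (⊤ : SimpleGraph (Fin n))).Walk a b) :
    projW G W.reverse = (projW G W).reverse := by
  induction W with
  | nil => simp [projW]
  | @cons a c b h W ih =>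
    rw [Walk.reverse_cons, projW_append, ih]
    by_cases hc : a.1 = c.1
    · obtain ⟨a1, a2⟩ := a; obtain ⟨c1, c2⟩ := c
      simp only at hc; subst hc
      simp only [projW, dif_pos rfl, Walk.copy_rfl_rfl, dite_true,
        Walk.append_nil, Walk.reverse_nil]
    · simp only [projW, dif_neg hc, dif_neg (fun hh : c.1 = a.1 => hc hh.symm),
        Walk.reverse_cons, Walk.reverse_nil, Walk.nil_append]

end TollProj

section TollCore

variable {V : Type*} {G : SimpleGraph V} {n : ℕ}

lemma no_u_interior {u v : V} {j k : Fin n} (huv : u ≠ v) (hG : ¬ G.Adj u v)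
    (W : (lexProd G (⊤ : SimpleGraph (Fin n))).Walk (u, j) (v, k))
    (hA : ∀ p, 0 < p → p < W.length →
      ((lexProd G (⊤ : SimpleGraph (Fin n))).Adj (u, j) (W.getVert p) ↔ p = 1)) :
    ∀ z ∈ W.support, z.1 = u → z = (u, j) := by
  have hnadjP : ¬ (lexProd G (⊤ : SimpleGraph (Fin n))).Adj (u, j) (v, k) := by
    intro h
    rcases adjP.mp h with h' | ⟨h', -⟩
    · exact hG h'
    · exact huv h'
  have hL : 2 ≤ W.length :=
    two_le_length (fun he => huv (congrArg Prod.fst he)) hnadjP W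
  intro z hz hz1
  obtain ⟨q, hq, hqL⟩ := Walk.mem_support_iff_exists_getVert.mp hz
  rcases eq_or_lt_of_le hqL with heq | hqlt
  · exfalso
    rw [heq, Walk.getVert_length] at hq
    exact huv (hz1 ▸ congrArg Prod.fst hq.symm ▸ rfl)
  rcases Nat.eq_zero_or_pos q with rfl | hq0
  · rw [Walk.getVert_zero] at hq; exact hq.symm
  by_cases hzj : z.2 = j
  · exact Prod.ext hz1 hzj
  exfalso
  have hadj1 : (lexProd G (⊤ : SimpleGraph (Fin n))).Adj (u, j) (W.getVert q) := by
    rw [hq]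
    exact adjP.mpr (Or.inr ⟨hz1.symm, fun hh => hzj hh.symm⟩)
  have hq1 : q = 1 := (hA q hq0 hqlt).mp hadj1
  subst hq1
  have h12 := W.adj_getVert_succ (i := 1) (by omega)
  rcases Nat.lt_or_ge 2 W.length with h2L | h2L
  · -- 2 < W.length
    have hn2 : ¬ (lexProd G (⊤ : SimpleGraph (Fin n))).Adj (u, j) (W.getVert 2) := by
      intro hh
      have := (hA 2 (by omega) h2L).mp hh
      omega
    rw [hq] at h12
    rcases adjP.mp h12 with h' | ⟨h', hne2⟩
    · exact hn2 (adjP.mpr (Or.inl (hz1 ▸ h')))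
    · have hw21 : (W.getVert 2).1 = u := h'.symm.trans hz1
      have hw2j : (W.getVert 2).2 = j := by
        by_contra hne
        exact hn2 (adjP.mpr (Or.inr ⟨hw21.symm, fun hh => hne hh.symm⟩))
      have hw2eq : W.getVert 2 = (u, j) := Prod.ext hw21 hw2j
      have h23 := W.adj_getVert_succ (i := 2) h2L
      rw [hw2eq] at h23
      rcases eq_or_lt_of_le (show 3 ≤ W.length by omega) with h3L | h3L
      · have h3v : W.getVert 3 = (v, k) := by rw [h3L, Walk.getVert_length]
        rw [h3v] at h23
        exact hnadjP h23
      · have := (hA 3 (by omega) h3L).mp h23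
        omega
  · -- W.length = 2
    have hW2 : W.length = 2 := by omega
    have hgv2 : W.getVert 2 = (v, k) := by rw [← hW2, Walk.getVert_length]
    rw [hq, hgv2] at h12
    rcases adjP.mp h12 with h' | ⟨h', -⟩
    · exact hG (hz1 ▸ h')
    · exact huv (hz1 ▸ h')

lemma notAdjP_tail_tail {u v : V} {j k : Fin n} (huv : u ≠ v) (hG : ¬ G.Adj u v)
    (W : (lexProd G (⊤ : SimpleGraph (Fin n))).Walk (u, j) (v, k))
    (hA : ∀ p, 0 < p → p < W.length →
      ((lexProd G (⊤ : SimpleGraph (Fin n))).Adj (u, j) (W.getVert p) ↔ p = 1)) :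
    ∀ z ∈ W.support.tail.tail, ¬ (lexProd G (⊤ : SimpleGraph (Fin n))).Adj (u, j) z := by
  intro z hz
  obtain ⟨q, hq, h2, hzq⟩ := mem_tail_tail hz
  have hlen : W.support.length = W.length + 1 := Walk.length_support W
  have hql : q ≤ W.length := by omega
  have hzg : z = W.getVert q := by
    rw [← hzq, ← support_getD_eq_getVert W (u, j) q hql, List.getD_eq_getElem]
  rcases eq_or_lt_of_le hql with heq | hlt
  · rw [hzg, heq, Walk.getVert_length]
    intro h
    rcases adjP.mp h with h' | ⟨h', -⟩
    · exact hG h'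
    · exact huv h'
  · intro hadj
    have := (hA q (by omega) hlt).mp (hzg ▸ hadj)
    omega

lemma hA_reverse {u v : V} {j k : Fin n}
    (W : (lexProd G (⊤ : SimpleGraph (Fin n))).Walk (u, j) (v, k))
    (hB : ∀ p, 0 < p → p < W.length →
      ((lexProd G (⊤ : SimpleGraph (Fin n))).Adj (v, k) (W.getVert p) ↔ p = W.length - 1)) :
    ∀ p, 0 < p → p < W.reverse.length →
      ((lexProd G (⊤ : SimpleGraph (Fin n))).Adj (v, k) (W.reverse.getVert p) ↔ p = 1) := by
  intro p hp0 hpL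
  rw [Walk.length_reverse] at hpL
  rw [Walk.getVert_reverse]
  rw [hB (W.length - p) (by omega) (by omega)]
  omega

lemma projW_notadj {u v : V} {j k : Fin n} (huv : u ≠ v) (hG : ¬ G.Adj u v)
    (W : (lexProd G (⊤ : SimpleGraph (Fin n))).Walk (u, j) (v, k))
    (hA : ∀ p, 0 < p → p < W.length →
      ((lexProd G (⊤ : SimpleGraph (Fin n))).Adj (u, j) (W.getVert p) ↔ p = 1)) :
    ∀ x ∈ (projW G W).support.tail.tail, ¬ G.Adj u x := by
  intro x hx hGx
  obtain ⟨m, hm⟩ := projW_support_tail_tail W x hx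
  exact notAdjP_tail_tail huv hG W hA (x, m) hm (adjP.mpr (Or.inl hGx))

lemma projW_tolled {u v : V} {j k : Fin n} (huv : u ≠ v) (hG : ¬ G.Adj u v)
    (W : (lexProd G (⊤ : SimpleGraph (Fin n))).Walk (u, j) (v, k))
    (hA : ∀ p, 0 < p → p < W.length →
      ((lexProd G (⊤ : SimpleGraph (Fin n))).Adj (u, j) (W.getVert p) ↔ p = 1))
    (hB : ∀ p, 0 < p → p < W.length →
      ((lexProd G (⊤ : SimpleGraph (Fin n))).Adj (v, k) (W.getVert p) ↔ p = W.length - 1)) :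
    IsTolledWalk G (projW G W) := by
  have hL2 : 2 ≤ (projW G W).length := two_le_length huv hG _
  unfold IsTolledWalk
  refine Or.inr (Or.inr ⟨hG, huv, hL2, ?_, ?_⟩)
  · intro p hp0 hpL
    rw [support_getD_eq_getVert _ _ p hpL.le]
    by_cases hp1 : p = 1
    · subst hp1
      refine iff_of_true ?_ rfl
      have h01 := (projW G W).adj_getVert_succ (i := 0) (by omega)
      simpa using h01
    · refine iff_of_false ?_ hp1
      have hsl : (projW G W).support.length = (projW G W).length + 1 :=
        Walk.length_support _
      have h1 : (projW G W).support[p]'(by omega) = (projW G W).getVert p := by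
        rw [← support_getD_eq_getVert (projW G W) u p hpL.le, List.getD_eq_getElem]
      have hmem : (projW G W).getVert p ∈ (projW G W).support.tail.tail := by
        rw [← h1]
        exact getElem_mem_tail_tail _ p (by omega) (by omega)
      exact projW_notadj huv hG W hA _ hmem
  · intro p hp0 hpL
    rw [support_getD_eq_getVert _ _ p hpL.le]
    by_cases hp1 : p = (projW G W).length - 1
    · refine iff_of_true ?_ hp1
      rw [hp1]
      have hadj := (projW G W).adj_getVert_succ (i := (projW G W).length - 1) (by omega)
      have heq : (projW G W).length - 1 + 1 = (projW G W).length := by omega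
      rw [heq, Walk.getVert_length] at hadj
      exact hadj.symm
    · refine iff_of_false ?_ hp1
      have hsl : (projW G W).support.length = (projW G W).length + 1 :=
        Walk.length_support _
      have h1 : (projW G W).support[p]'(by omega) = (projW G W).getVert p := by
        rw [← support_getD_eq_getVert (projW G W) u p hpL.le, List.getD_eq_getElem]
      have hidx : ((projW G W).support.reverse[(projW G W).length - p]'(by simp [hsl]))
          = (projW G W).support[p]'(by omega) := by
        rw [List.getElem_reverse]
        congr 1
        simp [hsl]
        omega
      have hrev : (projW G W).getVert p ∈ (projW G (W.reverse)).support.tail.tail := by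
        rw [projW_reverse, Walk.support_reverse, ← h1, ← hidx]
        exact getElem_mem_tail_tail _ _ (by simp [hsl]) (by omega)
      exact projW_notadj huv.symm (fun hh => hG hh.symm) W.reverse (hA_reverse W hB) _ hrev

end TollCore

section TollFinal

variable {V : Type*} {G : SimpleGraph V} {n : ℕ}

lemma extreme_pair_mem {s : V} (hs : s ∈ extremeVertices G) (i : Fin n)
    {T : Set (V × Fin n)}
    (hT : IsTollSet (lexProd G (⊤ : SimpleGraph (Fin n))) T) : (s, i) ∈ T := by
  obtain ⟨a, ha, b, hb, W, hW, hmem⟩ := hT (s, i)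
  obtain ⟨u, j⟩ := a
  obtain ⟨v, k⟩ := b
  by_cases h1 : (s, i) = (u, j)
  · exact h1 ▸ ha
  by_cases h2 : (s, i) = (v, k)
  · exact h2 ▸ hb
  exfalso
  unfold IsTolledWalk at hW
  rcases hW with ⟨heq, hlen⟩ | ⟨hadj, hsupp⟩ | ⟨hnadj, hne, hL, hA0, hB0⟩
  · cases W with
    | nil =>
      rw [Walk.support_nil, List.mem_singleton] at hmem
      exact h1 hmem
    | cons h W => simp at hlen
  · rw [hsupp, List.mem_cons, List.mem_singleton] at hmem
    rcases hmem with hmem | hmem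
    · exact h1 hmem
    · exact h2 hmem
  · have huv : u ≠ v := by
      rintro rfl
      refine hnadj (adjP.mpr (Or.inr ⟨rfl, ?_⟩))
      intro hjk
      exact hne (Prod.ext rfl hjk)
    have hGuv : ¬ G.Adj u v := fun h => hnadj (adjP.mpr (Or.inl h))
    have hA : ∀ p, 0 < p → p < W.length →
        ((lexProd G (⊤ : SimpleGraph (Fin n))).Adj (u, j) (W.getVert p) ↔ p = 1) := by
      intro p h0 hL'
      rw [← support_getD_eq_getVert W (u, j) p hL'.le]
      exact hA0 p h0 hL'
    have hB : ∀ p, 0 < p → p < W.length →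
        ((lexProd G (⊤ : SimpleGraph (Fin n))).Adj (v, k) (W.getVert p) ↔ p = W.length - 1) := by
      intro p h0 hL'
      rw [← support_getD_eq_getVert W (u, j) p hL'.le]
      exact hB0 p h0 hL'
    have hsu : s ≠ u := by
      intro he
      exact h1 (no_u_interior huv hGuv W hA (s, i) hmem he)
    have hsv : s ≠ v := by
      intro he
      exact h2 (no_u_interior huv.symm (fun hh => hGuv hh.symm) W.reverse
        (hA_reverse W hB) (s, i)
        (by rwa [Walk.support_reverse, List.mem_reverse]) he)
    exact hs u v hsu.symm hsv.symm
      ⟨projW G W, projW_tolled huv hGuv W hA hB, mem_projW_of_mem W (s, i) hmem⟩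

/-- The lifting homomorphism along a section `f`. -/
def liftHom (G : SimpleGraph V) (f : V → Fin n) :
    G →g lexProd G (⊤ : SimpleGraph (Fin n)) where
  toFun a := (a, f a)
  map_rel' := fun h => Or.inl h

lemma getD_map_lift {α β : Type*} (g : α → β) (l : List α) (d : α) (p : ℕ)
    (hp : p < l.length) : (l.map g).getD p (g d) = g (l.getD p d) := by
  rw [List.getD_eq_getElem _ _ (by simpa using hp), List.getElem_map,
    List.getD_eq_getElem _ _ hp]

lemma lift_tolled (f : V → Fin n) {u v : V} (W : G.Walk u v) (hW : IsTolledWalk G W) :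
    IsTolledWalk (lexProd G (⊤ : SimpleGraph (Fin n))) (W.map (liftHom G f)) := by
  unfold IsTolledWalk at hW ⊢
  rcases hW with ⟨heq, hlen⟩ | ⟨hadj, hsupp⟩ | ⟨hnadj, hne, hL, hA, hB⟩
  · subst heq
    exact Or.inl ⟨rfl, by simp [hlen]⟩
  · refine Or.inr (Or.inl ⟨Or.inl hadj, ?_⟩)
    rw [Walk.support_map, hsupp]
    rfl
  · have hlen : (W.map (liftHom G f)).length = W.length := Walk.length_map _ _
    have hsl : W.support.length = W.length + 1 := Walk.length_support W
    refine Or.inr (Or.inr ⟨?_, ?_, by omega, ?_, ?_⟩)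
    · intro h
      rcases adjP.mp h with h' | ⟨h', -⟩
      · exact hnadj h'
      · exact hne h'
    · intro h
      exact hne (congrArg Prod.fst h)
    · intro p hp0 hpL
      rw [hlen] at hpL
      have : (W.map (liftHom G f)).support.getD p (liftHom G f u)
          = liftHom G f (W.support.getD p u) := by
        rw [Walk.support_map]
        exact getD_map_lift _ _ _ p (by omega)
      rw [this, ← hA p hp0 hpL]
      constructor
      · intro h
        rcases adjP.mp h with h' | ⟨h', hne'⟩
        · exact h'
        · exact absurd (congrArg f h') hne'
      · intro h
        exact adjP.mpr (Or.inl h)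
    · intro p hp0 hpL
      rw [hlen] at hpL
      have : (W.map (liftHom G f)).support.getD p (liftHom G f u)
          = liftHom G f (W.support.getD p u) := by
        rw [Walk.support_map]
        exact getD_map_lift _ _ _ p (by omega)
      rw [this, hlen, ← hB p hp0 hpL]
      constructor
      · intro h
        rcases adjP.mp h with h' | ⟨h', hne'⟩
        · exact h'
        · exact absurd (congrArg f h') hne'
      · intro h
        exact adjP.mpr (Or.inl h)

lemma isTollSet_univ {α : Type*} (H : SimpleGraph α) : IsTollSet H Set.univ :=
  fun x => ⟨x, trivial, x, trivial, Walk.nil, Or.inl ⟨rfl, rfl⟩, by simp⟩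

lemma tollNumber_spec {α : Type*} [Finite α] (H : SimpleGraph α) :
    ∃ S : Set α, S.Finite ∧ S.ncard = tollNumber H ∧ IsTollSet H S := by
  have hmem : tollNumber H ∈ {m | ∃ S : Set α, S.Finite ∧ S.ncard = m ∧ IsTollSet H S} :=
    Nat.sInf_mem ⟨(Set.univ : Set α).ncard, Set.univ, Set.finite_univ, rfl, isTollSet_univ H⟩
  obtain ⟨S, h1, h2, h3⟩ := hmem
  exact ⟨S, h1, h2, h3⟩

lemma ncard_prod_univ {α β : Type*} (s : Set α) :
    (s ×ˢ (Set.univ : Set β)).ncard = s.ncard * Nat.card β := by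
  rw [← Nat.card_coe_set_eq, Nat.card_congr (Equiv.Set.prod s (Set.univ : Set β)),
    Nat.card_prod, Nat.card_coe_set_eq, Nat.card_coe_set_eq, Set.ncard_univ]

end TollFinal

theorem stmt8 {V : Type*} [Fintype V] [Nontrivial V] (G : SimpleGraph V) (n : ℕ) (hn : 1 ≤ n) :
    n * (extremeVertices G).ncard ≤ tollNumber (lexProd G (⊤ : SimpleGraph (Fin n))) ∧
    tollNumber (lexProd G (⊤ : SimpleGraph (Fin n))) ≤ n * tollNumber G := by
  constructor
  · -- lower bound
    obtain ⟨T, hTf, hTc, hTt⟩ := tollNumber_spec (lexProd G (⊤ : SimpleGraph (Fin n)))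
    have hsub : (extremeVertices G) ×ˢ (Set.univ : Set (Fin n)) ⊆ T := by
      rintro ⟨s, i⟩ ⟨hs, -⟩
      exact extreme_pair_mem hs i hTt
    calc n * (extremeVertices G).ncard
        = ((extremeVertices G) ×ˢ (Set.univ : Set (Fin n))).ncard := by
          rw [ncard_prod_univ, Nat.card_eq_fintype_card, Fintype.card_fin, mul_comm]
      _ ≤ T.ncard := Set.ncard_le_ncard hsub hTf
      _ = tollNumber (lexProd G (⊤ : SimpleGraph (Fin n))) := hTc
  · -- upper bound
    obtain ⟨S, hSf, hSc, hSt⟩ := tollNumber_spec G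
    have htoll : IsTollSet (lexProd G (⊤ : SimpleGraph (Fin n)))
        (S ×ˢ (Set.univ : Set (Fin n))) := by
      rintro ⟨a, i⟩
      obtain ⟨u, hu, v, hv, W, hW, ha⟩ := hSt a
      refine ⟨(u, i), ⟨hu, trivial⟩, (v, i), ⟨hv, trivial⟩,
        W.map (liftHom G (fun _ => i)), lift_tolled _ W hW, ?_⟩
      have hmm := List.mem_map_of_mem (f := liftHom G (fun _ => i)) ha
      rw [← Walk.support_map] at hmm
      exact hmm
    have hle : tollNumber (lexProd G (⊤ : SimpleGraph (Fin n)))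
        ≤ (S ×ˢ (Set.univ : Set (Fin n))).ncard :=
      Nat.sInf_le ⟨S ×ˢ (Set.univ : Set (Fin n)), hSf.prod Set.finite_univ, rfl, htoll⟩
    rw [ncard_prod_univ, Nat.card_eq_fintype_card, Fintype.card_fin, hSc, mul_comm] at hle
    exact hle
end

section
/- Let G and H be connected non-trivial graphs with H not complete. If tn(G ∘ H) = 3 · tn(G), then tn(G) = 2. -/
open SimpleGraph

-- ============ list helpers ============
namespace TollAux

lemma mem_drop2 {α : Type*} {l : List α} {w : α} :
    w ∈ l.drop 2 ↔ ∃ i, ∃ h : 2 + i < l.length, l[2+i] = w := by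
  rw [List.mem_iff_getElem]
  constructor
  · rintro ⟨n, hn, rfl⟩
    have hn' : 2 + n < l.length := by
      have := List.length_drop (i := 2) (l := l); omega
    exact ⟨n, hn', by rw [List.getElem_drop]⟩
  · rintro ⟨i, h, rfl⟩
    have hi : i < (l.drop 2).length := by
      have := List.length_drop (i := 2) (l := l); omega
    exact ⟨i, hi, by rw [List.getElem_drop]⟩

lemma mem_dl2 {α : Type*} {l : List α} {w : α} :
    w ∈ l.dropLast.dropLast ↔ ∃ i, ∃ h : i + 2 < l.length, l[i]'(by omega) = w := by
  rw [List.mem_iff_getElem]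
  constructor
  · rintro ⟨n, hn, rfl⟩
    have hn' : n + 2 < l.length := by
      have h1 := l.dropLast.length_dropLast
      have h2 := l.length_dropLast
      omega
    refine ⟨n, hn', ?_⟩
    rw [List.getElem_dropLast, List.getElem_dropLast]
  · rintro ⟨i, h, rfl⟩
    have hi : i < l.dropLast.dropLast.length := by
      have h1 := l.dropLast.length_dropLast
      have h2 := l.length_dropLast
      omega
    exact ⟨i, hi, by rw [List.getElem_dropLast, List.getElem_dropLast]⟩

variable {V : Type*} {G : SimpleGraph V}

lemma supp_zero {u v : V} (p : G.Walk u v) (h : 0 < p.support.length) :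
    p.support[0] = u := by
  cases p <;> simp [Walk.support_cons]

lemma supp_last {u v : V} (p : G.Walk u v) (h : p.length < p.support.length) :
    p.support[p.length] = v := by
  induction p with
  | nil => simp
  | cons ha q ih =>
      simp only [Walk.support_cons, Walk.length_cons]
      have hq : q.length < q.support.length := by
        simp [Walk.length_support]
      simpa using ih hq

lemma len0_eq {u v : V} (p : G.Walk u v) (h : p.length = 0) : u = v := by
  cases p with
  | nil => rfl
  | cons ha q => simp at h

lemma len1_adj {u v : V} (p : G.Walk u v) (h : p.length = 1) : G.Adj u v := by
  cases p with
  | nil => simp at h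
  | cons ha q =>
      have : q.length = 0 := by simpa using h
      exact (len0_eq q this) ▸ ha

lemma adj_supp_one {u v : V} (p : G.Walk u v) (hl : 0 < p.length)
    (h : 1 < p.support.length) : G.Adj u p.support[1] := by
  cases p with
  | nil => simp at hl
  | cons ha q =>
      simp only [Walk.support_cons]
      have h0 : 0 < q.support.length := by simp [Walk.length_support]
      have : (u :: q.support)[1] = q.support[0] := rfl
      show G.Adj u (q.support[0]'h0); rw [supp_zero q h0]
      exact ha

lemma adj_supp_pen {u v : V} (p : G.Walk u v) (hl : 0 < p.length)
    (h : p.length - 1 < p.support.length) : G.Adj v (p.support[p.length - 1]) := by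
  induction p with
  | nil => simp at hl
  | cons ha q ih =>
      simp only [Walk.support_cons, Walk.length_cons]
      rcases Nat.eq_zero_or_pos q.length with hq0 | hqpos
      · have huv := len0_eq q hq0
        subst huv
        simp [hq0, ha.symm]
      · have hql : q.length - 1 < q.support.length := by simp [Walk.length_support]
        have hidx : q.length + 1 - 1 = (q.length - 1) + 1 := by omega
        simp only [hidx, List.getElem_cons_succ]
        exact ih hqpos hql

end TollAux

-- ============ TW: case-3 tolled walks ============
namespace TollAux

variable {V : Type*} {G : SimpleGraph V}

/-- The "generic" (case 3) tolled walk predicate. -/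
def TW {u v : V} (W : G.Walk u v) : Prop :=
  ¬ G.Adj u v ∧ u ≠ v ∧ 2 ≤ W.length ∧
    (∀ i, 0 < i → i < W.length → (G.Adj u (W.support.getD i u) ↔ i = 1)) ∧
    (∀ i, 0 < i → i < W.length → (G.Adj v (W.support.getD i u) ↔ i = W.length - 1))

lemma TW.isTolled {u v : V} {W : G.Walk u v} (h : TW W) : IsTolledWalk G W :=
  Or.inr (Or.inr h)

lemma TW.mem_tollInterval {u v x : V} {W : G.Walk u v} (h : TW W)
    (hx : x ∈ W.support) : x ∈ tollInterval G u v :=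
  ⟨W, h.isTolled, hx⟩

lemma TW.nadj {u v : V} {W : G.Walk u v} (h : TW W) : ¬ G.Adj u v := h.1
lemma TW.ne {u v : V} {W : G.Walk u v} (h : TW W) : u ≠ v := h.2.1
lemma TW.two_le {u v : V} {W : G.Walk u v} (h : TW W) : 2 ≤ W.length := h.2.2.1

lemma TW.memU {u v : V} {W : G.Walk u v} (hT : TW W) :
    ∀ w ∈ W.support.drop 2, ¬ G.Adj u w := by
  intro w hw
  obtain ⟨i, hi, rfl⟩ := mem_drop2.1 hw
  have hlen := W.length_support
  rcases Nat.lt_or_ge (2+i) W.length with hlt | hge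
  · have := hT.2.2.2.1 (2+i) (by omega) hlt
    rw [List.getD_eq_getElem _ _ (by omega)] at this
    intro hadj
    exact absurd (this.1 hadj) (by omega)
  · have h2i : 2 + i = W.length := by omega
    rw [show W.support[2+i] = W.support[W.length]'(by omega) from by congr 1]
    rw [supp_last W (by omega)]
    exact hT.1

lemma TW.memV {u v : V} {W : G.Walk u v} (hT : TW W) :
    ∀ w ∈ W.support.dropLast.dropLast, ¬ G.Adj v w := by
  intro w hw
  obtain ⟨i, hi, rfl⟩ := mem_dl2.1 hw
  have hlen := W.length_support
  rcases Nat.eq_zero_or_pos i with rfl | hpos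
  · rw [supp_zero W (by omega)]
    exact fun hadj => hT.1 hadj.symm
  · have := hT.2.2.2.2 i hpos (by omega)
    rw [List.getD_eq_getElem _ _ (by omega)] at this
    intro hadj
    have := this.1 hadj
    omega

lemma TW.mk {u v : V} {W : G.Walk u v} (hadj : ¬ G.Adj u v) (hne : u ≠ v)
    (hlen : 2 ≤ W.length)
    (hU : ∀ w ∈ W.support.drop 2, ¬ G.Adj u w)
    (hV : ∀ w ∈ W.support.dropLast.dropLast, ¬ G.Adj v w) : TW W := by
  have hls := W.length_support
  refine ⟨hadj, hne, hlen, ?_, ?_⟩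
  · intro i h0 hi
    rw [List.getD_eq_getElem _ _ (by omega)]
    rcases Nat.lt_or_ge i 2 with h2 | h2
    · have : i = 1 := by omega
      subst this
      simp only [eq_self_iff_true, iff_true]
      exact adj_supp_one W (by omega) (by omega)
    · have hmem : W.support[i] ∈ W.support.drop 2 :=
        mem_drop2.2 ⟨i - 2, by omega, by congr 1; omega⟩
      have := hU _ hmem
      constructor
      · exact fun h => absurd h this
      · omega
  · intro i h0 hi
    rw [List.getD_eq_getElem _ _ (by omega)]
    rcases Nat.eq_or_lt_of_le (Nat.le_sub_one_of_lt hi) with heq | hlt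
    · subst heq
      simp only [eq_self_iff_true, iff_true]
      exact adj_supp_pen W (by omega) (by omega)
    · have hmem : W.support[i] ∈ W.support.dropLast.dropLast :=
        mem_dl2.2 ⟨i, by omega, rfl⟩
      have := hV _ hmem
      constructor
      · exact fun h => absurd h this
      · omega

lemma tolled_destruct {u v x : V} (hx : x ∈ tollInterval G u v) (hxu : x ≠ u)
    (hxv : x ≠ v) : ∃ W : G.Walk u v, TW W ∧ x ∈ W.support := by
  obtain ⟨W, hW, hmem⟩ := hx
  rcases hW with ⟨rfl, hlen⟩ | ⟨hadj, hsupp⟩ | h3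
  · obtain ⟨n, hn, rfl⟩ := List.mem_iff_getElem.1 hmem
    have := W.length_support
    have hn0 : n = 0 := by omega
    subst hn0
    exact absurd (supp_zero W (by omega)) hxu
  · rw [hsupp] at hmem
    simp at hmem
    rcases hmem with rfl | rfl
    · exact absurd rfl hxu
    · exact absurd rfl hxv
  · exact ⟨W, h3, hmem⟩

lemma TW.reverse {u v : V} {W : G.Walk u v} (hT : TW W) : TW W.reverse := by
  have hls := W.length_support
  refine TW.mk (fun h => hT.1 h.symm) hT.ne.symm (by rw [Walk.length_reverse]; exact hT.two_le) ?_ ?_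
  · intro w hw
    rw [Walk.support_reverse] at hw
    obtain ⟨i, hi, rfl⟩ := mem_drop2.1 hw
    rw [List.length_reverse] at hi
    rw [List.getElem_reverse]
    have hmem : W.support[W.support.length - 1 - (2+i)] ∈ W.support.dropLast.dropLast := by
      apply mem_dl2.2
      exact ⟨W.support.length - 1 - (2+i), by omega, by congr 1⟩
    exact hT.memV _ hmem
  · intro w hw
    rw [Walk.support_reverse] at hw
    obtain ⟨i, hi, rfl⟩ := mem_dl2.1 hw
    rw [List.length_reverse] at hi
    rw [List.getElem_reverse]
    have hmem : W.support[W.support.length - 1 - i] ∈ W.support.drop 2 := by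
      apply mem_drop2.2
      refine ⟨W.support.length - 1 - i - 2, by omega, by congr 1; omega⟩
    exact hT.memU _ hmem

end TollAux

-- ============ constructions ============
namespace TollAux

variable {V : Type*} {G : SimpleGraph V}

lemma drop2_append {α : Type*} {l1 l2 : List α} (h : 2 ≤ l1.length) :
    (l1 ++ l2).drop 2 = l1.drop 2 ++ l2 := by
  rw [List.drop_append, show 2 - l1.length = 0 by omega, List.drop_zero]

lemma dl2_append {α : Type*} {l1 l2 : List α} (h : 2 ≤ l2.length) :
    (l1 ++ l2).dropLast.dropLast = l1 ++ l2.dropLast.dropLast := by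
  have h1 : l2 ≠ [] := by intro hh; rw [hh] at h; simp at h
  have h2 : l2.dropLast ≠ [] := by
    have := l2.length_dropLast
    intro hh
    rw [hh] at this
    simp at this
    omega
  rw [List.dropLast_append_of_ne_nil h1, List.dropLast_append_of_ne_nil h2]

lemma dl2_cons {α : Type*} {a : α} {l : List α} (h : 2 ≤ l.length) :
    (a :: l).dropLast.dropLast = a :: l.dropLast.dropLast := by
  have h1 : l ≠ [] := by intro hh; rw [hh] at h; simp at h
  have h2 : l.dropLast ≠ [] := by
    have := l.length_dropLast
    intro hh
    rw [hh] at this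
    simp at this
    omega
  rw [List.dropLast_cons_of_ne_nil h1, List.dropLast_cons_of_ne_nil h2]

lemma TW.append {a b c : V} {W1 : G.Walk a b} {W2 : G.Walk b c}
    (h1 : TW W1) (h2 : TW W2) (hac : ¬ G.Adj a c) (hnac : a ≠ c)
    (hA : ∀ w ∈ W2.support, ¬ G.Adj a w) (hC : ∀ w ∈ W1.support, ¬ G.Adj c w) :
    TW (W1.append W2) := by
  have hsupp : (W1.append W2).support = W1.support ++ W2.support.tail :=
    W1.support_append W2
  have hls1 := W1.length_support
  have hls2 := W2.length_support
  have hd1 : (2:ℕ) ≤ W1.support.length := by have := h1.two_le; omega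
  refine TW.mk hac hnac (by rw [Walk.length_append]; have := h1.two_le; omega) ?_ ?_
  · intro w hw
    rw [hsupp, drop2_append hd1] at hw
    rcases List.mem_append.1 hw with h | h
    · exact h1.memU _ h
    · exact hA _ (List.mem_of_mem_tail h)
  · intro w hw
    have hd2 : (2:ℕ) ≤ W2.support.tail.length := by
      have := h2.two_le
      rw [List.length_tail]
      omega
    rw [hsupp, dl2_append hd2] at hw
    rcases List.mem_append.1 hw with h | h
    · exact hC _ h
    · -- w ∈ W2.support.tail.dropLast.dropLast ⊆ W2.support.dropLast.dropLast
      apply h2.memV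
      obtain ⟨i, hi2, hEq⟩ := mem_dl2.1 h
      have hi3 : i + 2 < W2.support.length - 1 := by
        rw [List.length_tail] at hi2; exact hi2
      refine mem_dl2.2 ⟨i + 1, by omega, ?_⟩
      rw [← List.getElem_tail (i := i) (by omega)]
      exact hEq

lemma insert_mem {u v w s : V} [DecidableEq V] {W : G.Walk u v} (hT : TW W)
    (hw : w ∈ W.support) (hwu : w ≠ u) (hwv : w ≠ v)
    (huw : ¬ G.Adj u w) (hvw : ¬ G.Adj v w) (hws : G.Adj w s)
    (hsu : s ≠ u) (hsv : s ≠ v) (hus : ¬ G.Adj u s) (hvs : ¬ G.Adj v s) :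
    s ∈ tollInterval G u v := by
  set W1 := W.takeUntil w hw with hW1
  set W2 := W.dropUntil w hw with hW2
  have hspec : W1.append W2 = W := W.take_spec hw
  have hsupp : W.support = W1.support ++ W2.support.tail := by
    conv_lhs => rw [← hspec]
    exact W1.support_append W2
  have hlen : W.length = W1.length + W2.length := by
    conv_lhs => rw [← hspec]
    exact W1.length_append W2
  have hls1 := W1.length_support
  have hls2 := W2.length_support
  have hl1 : 1 ≤ W1.length := by
    rcases Nat.eq_zero_or_pos W1.length with h0 | h
    · exact absurd (len0_eq W1 h0).symm hwu
    · exact h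
  have hl2 : 2 ≤ W2.length := by
    rcases Nat.lt_or_ge W2.length 2 with h0 | h
    · interval_cases h : W2.length
      · exact absurd (len0_eq W2 h) hwv
      · exact absurd ((len1_adj W2 h).symm) hvw
    · exact h
  have hdrop : W.support.drop 2 = W1.support.drop 2 ++ W2.support.tail := by
    rw [hsupp, drop2_append (by omega)]
  have hdl : W.support.dropLast.dropLast = W1.support ++ W2.support.tail.dropLast.dropLast := by
    rw [hsupp, dl2_append (by rw [List.length_tail]; omega)]
  -- the new walk
  set M : G.Walk w v := Walk.cons hws (Walk.cons hws.symm W2) with hM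
  set Z : G.Walk u v := W1.append M with hZ
  have hZsupp : Z.support = W1.support ++ (s :: W2.support) := by
    rw [hZ, W1.support_append M, hM]
    simp [Walk.support_cons]
  have hZlen : Z.length = W1.length + (2 + W2.length) := by
    rw [hZ, W1.length_append M, hM]
    simp [Walk.length_cons]
    omega
  have hTZ : TW Z := by
    refine TW.mk hT.nadj hT.ne (by omega) ?_ ?_
    · intro w' hw'
      rw [hZsupp, drop2_append (by omega)] at hw'
      rcases List.mem_append.1 hw' with h | h
      · exact hT.memU _ (hdrop ▸ List.mem_append_left _ h)
      · rcases List.mem_cons.1 h with rfl | h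
        · exact hus
        · rw [W2.support_eq_cons] at h
          rcases List.mem_cons.1 h with rfl | h
          · exact huw
          · exact hT.memU _ (hdrop ▸ List.mem_append_right _ h)
    · intro w' hw'
      rw [hZsupp, dl2_append (by rw [List.length_cons, hls2]; omega), dl2_cons (by omega)] at hw'
      rcases List.mem_append.1 hw' with h | h
      · -- w' ∈ W1.support ⊆ W.support.dropLast.dropLast
        apply hT.memV
        rw [hdl]
        exact List.mem_append_left _ h
      · rcases List.mem_cons.1 h with rfl | h
        · exact hvs
        · -- w' ∈ W2.support.dropLast.dropLast
          rw [W2.support_eq_cons, dl2_cons (by rw [List.length_tail]; omega)] at h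
          rcases List.mem_cons.1 h with rfl | h
          · exact hvw
          · exact hT.memV _ (hdl ▸ List.mem_append_right _ h)
  exact hTZ.mem_tollInterval (by rw [hZsupp]; exact List.mem_append_right _ List.mem_cons_self)

end TollAux

namespace TollAux

variable {V : Type*} {G : SimpleGraph V}

lemma cross {s1 s2 u v x y : V} [DecidableEq V] {W12 : G.Walk s1 s2} {W' : G.Walk u v}
    (h12 : TW W12) (hx : x ∈ W12.support) (hxs1 : x ≠ s1)
    (hT' : TW W') (hy : y ∈ W'.support) (hyu : y ≠ u)
    (hxy : G.Adj x y)
    (hB1 : ∀ w ∈ W'.support, ¬ G.Adj s1 w)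
    (hB2 : ∀ w ∈ W12.support, ¬ G.Adj u w)
    (hs1u : s1 ≠ u) (hns1u : ¬ G.Adj s1 u) :
    ∃ Z : G.Walk s1 u, TW Z := by
  set P1 := W12.takeUntil x hx with hP1
  set T' := W'.takeUntil y hy with hT'def
  set Seg := T'.reverse with hSeg
  refine ⟨P1.append (Walk.cons hxy Seg), ?_⟩
  have hsupp12 : W12.support = P1.support ++ (W12.dropUntil x hx).support.tail := by
    conv_lhs => rw [← W12.take_spec hx]
    exact (W12.takeUntil x hx).support_append _
  have hsupp' : W'.support = T'.support ++ (W'.dropUntil y hy).support.tail := by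
    conv_lhs => rw [← W'.take_spec hy]
    exact (W'.takeUntil y hy).support_append _
  have hlsP := P1.length_support
  have hlsT := T'.length_support
  have hp : 1 ≤ P1.length := by
    rcases Nat.eq_zero_or_pos P1.length with h0 | h
    · exact absurd (len0_eq P1 h0).symm hxs1
    · exact h
  have hq : 1 ≤ T'.length := by
    rcases Nat.eq_zero_or_pos T'.length with h0 | h
    · exact absurd (len0_eq T' h0).symm hyu
    · exact h
  have hZsupp : (P1.append (Walk.cons hxy Seg)).support = P1.support ++ Seg.support := by
    rw [P1.support_append]
    simp [Walk.support_cons]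
  have hdrop12 : W12.support.drop 2 =
      P1.support.drop 2 ++ (W12.dropUntil x hx).support.tail := by
    rw [hsupp12, drop2_append (by omega)]
  have hdrop' : W'.support.drop 2 =
      T'.support.drop 2 ++ (W'.dropUntil y hy).support.tail := by
    rw [hsupp', drop2_append (by omega)]
  have hSegsupp : Seg.support = T'.support.reverse := T'.support_reverse
  have hSeglen : Seg.support.length = T'.length + 1 := by
    rw [hSegsupp, List.length_reverse, hlsT]
  refine TW.mk hns1u hs1u (by rw [Walk.length_append]; simp [Walk.length_cons]; omega) ?_ ?_
  · intro w' hw'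
    rw [hZsupp, drop2_append (by omega)] at hw'
    rcases List.mem_append.1 hw' with h | h
    · exact h12.memU _ (hdrop12 ▸ List.mem_append_left _ h)
    · rw [hSegsupp, List.mem_reverse] at h
      exact hB1 _ (hsupp' ▸ List.mem_append_left _ h)
  · intro w' hw'
    rw [hZsupp, dl2_append (by omega)] at hw'
    rcases List.mem_append.1 hw' with h | h
    · exact hB2 _ (hsupp12 ▸ List.mem_append_left _ h)
    · -- w' ∈ Seg.support.dropLast.dropLast = (T'.support.drop 2).reverse
      have hdl2 : Seg.support.dropLast.dropLast = (T'.support.drop 2).reverse := by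
        rw [hSegsupp, List.dropLast_reverse, List.dropLast_reverse,
          ← List.drop_one, ← List.drop_one, List.drop_drop]
      rw [hdl2, List.mem_reverse] at h
      exact hT'.memU _ (hdrop' ▸ List.mem_append_left _ h)

end TollAux

namespace TollAux

variable {V : Type*} {G : SimpleGraph V}

lemma no_touch [DecidableEq V] {S : Set V}
    (hbad : ∀ s ∈ S, ∀ u ∈ S, ∀ v ∈ S, s ∈ tollInterval G u v → s = u ∨ s = v)
    (hscat : ∀ s ∈ S, ∀ t ∈ S, s ≠ t → ¬ G.Adj s t ∧ ∀ w, ¬(G.Adj s w ∧ G.Adj t w))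
    {a b w s : V} (ha : a ∈ S) (hb : b ∈ S) (hs : s ∈ S)
    (hsa : s ≠ a) (hsb : s ≠ b)
    {Wab : G.Walk a b} (hT : TW Wab) (hw : w ∈ Wab.support)
    (hwa : w ≠ a) (hwb : w ≠ b) (hadj : G.Adj s w) : False := by
  by_cases haw : G.Adj a w
  · exact (hscat a ha s hs (Ne.symm hsa)).2 w ⟨haw, hadj⟩
  by_cases hbw : G.Adj b w
  · exact (hscat b hb s hs (Ne.symm hsb)).2 w ⟨hbw, hadj⟩
  have h1 : ¬ G.Adj a s := (hscat a ha s hs (Ne.symm hsa)).1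
  have h2 : ¬ G.Adj b s := (hscat b hb s hs (Ne.symm hsb)).1
  have hmem := insert_mem hT hw hwa hwb haw hbw hadj.symm hsa hsb h1 h2
  rcases hbad s hs a ha b hb hmem with h | h
  · exact hsa h
  · exact hsb h

lemma no_two_partners [DecidableEq V] {S : Set V}
    (hbad : ∀ s ∈ S, ∀ u ∈ S, ∀ v ∈ S, s ∈ tollInterval G u v → s = u ∨ s = v)
    (hscat : ∀ s ∈ S, ∀ t ∈ S, s ≠ t → ¬ G.Adj s t ∧ ∀ w, ¬(G.Adj s w ∧ G.Adj t w))
    {s a c : V} (hs : s ∈ S) (ha : a ∈ S) (hc : c ∈ S)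
    (has : a ≠ s) (hcs : c ≠ s) (hac : a ≠ c)
    {Wa : G.Walk a s} {Wc : G.Walk s c} (h1 : TW Wa) (h2 : TW Wc) : False := by
  have hnac : ¬ G.Adj a c := (hscat a ha c hc hac).1
  have hA : ∀ w ∈ Wc.support, ¬ G.Adj a w := by
    intro w hw
    by_cases hws : w = s
    · rw [hws]; exact (hscat a ha s hs has).1
    by_cases hwc : w = c
    · rw [hwc]; exact hnac
    · exact fun hadj => no_touch hbad hscat hs hc ha has hac h2 hw hws hwc hadj
  have hC : ∀ w ∈ Wa.support, ¬ G.Adj c w := by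
    intro w hw
    by_cases hwa : w = a
    · rw [hwa]; exact (hscat c hc a ha (Ne.symm hac)).1
    by_cases hws2 : w = s
    · rw [hws2]; exact (hscat c hc s hs hcs).1
    · exact fun hadj => no_touch hbad hscat ha hs hc (Ne.symm hac) hcs h1 hw hwa hws2 hadj
  have hZ : TW (Wa.append Wc) := h1.append h2 hnac hac hA hC
  have hmem : s ∈ tollInterval G a c :=
    hZ.mem_tollInterval (by rw [Wa.support_append]; exact List.mem_append_left _ Wa.end_mem_support)
  rcases hbad s hs a ha c hc hmem with h | h
  · exact has h.symm
  · exact hcs h.symm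

lemma partner [DecidableEq V] {S : Set V} (hS : IsTollSet G S)
    (hbad : ∀ s ∈ S, ∀ u ∈ S, ∀ v ∈ S, s ∈ tollInterval G u v → s = u ∨ s = v)
    (hscat : ∀ s ∈ S, ∀ t ∈ S, s ≠ t → ¬ G.Adj s t ∧ ∀ w, ¬(G.Adj s w ∧ G.Adj t w))
    (hnbr : ∀ z : V, ∃ w, G.Adj z w) {s : V} (hs : s ∈ S) :
    ∃ b ∈ S, ∃ Wb : G.Walk s b, TW Wb := by
  obtain ⟨n, hsn⟩ := hnbr s
  have hnS : n ∉ S := by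
    intro hn
    exact (hscat s hs n hn hsn.ne).1 hsn
  obtain ⟨u, hu, v, hv, hmem⟩ := hS n
  have hnu : n ≠ u := fun h => hnS (h ▸ hu)
  have hnv : n ≠ v := fun h => hnS (h ▸ hv)
  obtain ⟨Wuv, hT, hmm⟩ := tolled_destruct hmem hnu hnv
  by_cases hsu : s = u
  · subst hsu; exact ⟨v, hv, Wuv, hT⟩
  by_cases hsv : s = v
  · subst hsv; exact ⟨u, hu, Wuv.reverse, hT.reverse⟩
  · exact (no_touch hbad hscat hu hv hs hsu hsv hT hmm hnu hnv hsn).elim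

lemma walk_cross {U : V → Prop} :
    ∀ {a b : V} (_ : G.Walk a b), U a → ¬ U b → ∃ p q, U p ∧ ¬ U q ∧ G.Adj p q := by
  intro a b P
  induction P with
  | nil => intro h h'; exact absurd h h'
  | @cons a' b' c' hadj q ih =>
      intro ha hb
      by_cases hm : U b'
      · exact ih hm hb
      · exact ⟨a', b', ha, hm, hadj⟩

end TollAux

namespace TollAux

variable {V : Type*} {G : SimpleGraph V}

lemma caseB [DecidableEq V] {S : Set V} (hS : IsTollSet G S)
    (hbad : ∀ s ∈ S, ∀ u ∈ S, ∀ v ∈ S, s ∈ tollInterval G u v → s = u ∨ s = v)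
    (hscat : ∀ s ∈ S, ∀ t ∈ S, s ≠ t → ¬ G.Adj s t ∧ ∀ w, ¬(G.Adj s w ∧ G.Adj t w))
    (hnbr : ∀ z : V, ∃ w, G.Adj z w)
    (hconn : G.Preconnected) (hcard : 3 ≤ S.ncard) : False := by
  obtain ⟨s1, hs1⟩ := Set.nonempty_of_ncard_ne_zero (by omega : S.ncard ≠ 0)
  obtain ⟨s2, hs2, W12, hT12⟩ := partner hS hbad hscat hnbr hs1
  have hne12 : s1 ≠ s2 := hT12.ne
  have huniq : ∀ b ∈ S, b ≠ s2 → ∀ Wb : G.Walk s1 b, TW Wb → False := by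
    intro b hb hbs2 Wb hTb
    exact no_two_partners hbad hscat hs1 hs2 hb hne12.symm hTb.ne.symm (Ne.symm hbs2)
      hT12.reverse hTb
  have huniq2 : ∀ b ∈ S, b ≠ s1 → ∀ Wb : G.Walk s2 b, TW Wb → False := by
    intro b hb hbs1 Wb hTb
    exact no_two_partners hbad hscat hs2 hs1 hb hne12 hTb.ne.symm (Ne.symm hbs1)
      hT12 hTb
  set U : V → Prop := fun z => z = s1 ∨ z = s2 ∨ ∃ W : G.Walk s1 s2, TW W ∧ z ∈ W.support
    with hUdef
  obtain ⟨s3, hs3, hs31, hs32⟩ : ∃ s3 ∈ S, s3 ≠ s1 ∧ s3 ≠ s2 := by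
    by_contra h
    push_neg at h
    have hsub : S ⊆ {s1, s2} := by
      intro z hz
      by_cases hz1 : z = s1
      · exact Or.inl hz1
      · exact Or.inr (h z hz hz1)
    have hle := Set.ncard_le_ncard hsub (Set.toFinite _)
    rw [Set.ncard_pair hne12] at hle
    omega
  have hs3U : ¬ U s3 := by
    rintro (h | h | ⟨W, hTW, hmm⟩)
    · exact hs31 h
    · exact hs32 h
    · rcases hbad s3 hs3 s1 hs1 s2 hs2 (hTW.mem_tollInterval hmm) with h | h
      · exact hs31 h
      · exact hs32 h
  have hs1U : U s1 := Or.inl rfl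
  obtain ⟨P⟩ := hconn s1 s3
  obtain ⟨p, q, hpU, hqU, hpq⟩ := walk_cross P hs1U hs3U
  have hqs1 : q ≠ s1 := fun h => hqU (Or.inl h)
  have hqs2 : q ≠ s2 := fun h => hqU (Or.inr (Or.inl h))
  -- analysis of a covering walk for q when q ∉ S, given some vertex z touching q
  by_cases hp1 : p = s1
  · subst hp1
    by_cases hqS : q ∈ S
    · exact (hscat p hs1 q hqS (Ne.symm hqs1)).1 hpq
    · obtain ⟨u, hu, v, hv, hmem⟩ := hS q
      have hqu : q ≠ u := fun h => hqS (h ▸ hu)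
      have hqv : q ≠ v := fun h => hqS (h ▸ hv)
      obtain ⟨W', hT', hq'⟩ := tolled_destruct hmem hqu hqv
      by_cases hu1 : u = p
      · subst hu1
        by_cases hv2 : v = s2
        · subst hv2
          exact hqU (Or.inr (Or.inr ⟨W', hT', hq'⟩))
        · exact huniq v hv hv2 W' hT'
      by_cases hv1 : v = p
      · subst hv1
        by_cases hu2 : u = s2
        · subst hu2
          exact hqU (Or.inr (Or.inr ⟨W'.reverse, hT'.reverse,
              by rw [Walk.support_reverse, List.mem_reverse]; exact hq'⟩))
        · exact huniq u hu hu2 W'.reverse hT'.reverse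
      · exact no_touch hbad hscat hu hv hs1 (fun h => hu1 h.symm) (fun h => hv1 h.symm)
          hT' hq' hqu hqv hpq
  by_cases hp2 : p = s2
  · subst hp2
    by_cases hqS : q ∈ S
    · exact (hscat p hs2 q hqS (Ne.symm hqs2)).1 hpq
    · obtain ⟨u, hu, v, hv, hmem⟩ := hS q
      have hqu : q ≠ u := fun h => hqS (h ▸ hu)
      have hqv : q ≠ v := fun h => hqS (h ▸ hv)
      obtain ⟨W', hT', hq'⟩ := tolled_destruct hmem hqu hqv
      by_cases hu2 : u = p
      · subst hu2
        by_cases hv1 : v = s1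
        · subst hv1
          exact hqU (Or.inr (Or.inr ⟨W'.reverse, hT'.reverse,
              by rw [Walk.support_reverse, List.mem_reverse]; exact hq'⟩))
        · exact huniq2 v hv hv1 W' hT'
      by_cases hv2 : v = p
      · subst hv2
        by_cases hu1 : u = s1
        · subst hu1
          exact hqU (Or.inr (Or.inr ⟨W', hT', hq'⟩))
        · exact huniq2 u hu hu1 W'.reverse hT'.reverse
      · exact no_touch hbad hscat hu hv hs2 (fun h => hu2 h.symm) (fun h => hv2 h.symm)
          hT' hq' hqu hqv hpq
  · rcases hpU with h | h | ⟨Wx, hTx, hxm⟩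
    · exact hp1 h
    · exact hp2 h
    by_cases hqS : q ∈ S
    · exact no_touch hbad hscat hs1 hs2 hqS hqs1 hqs2 hTx hxm hp1 hp2 hpq.symm
    · obtain ⟨u, hu, v, hv, hmem⟩ := hS q
      have hqu : q ≠ u := fun h => hqS (h ▸ hu)
      have hqv : q ≠ v := fun h => hqS (h ▸ hv)
      obtain ⟨W', hT', hq'⟩ := tolled_destruct hmem hqu hqv
      by_cases hu1 : u = s1
      · subst hu1
        by_cases hv2 : v = s2
        · subst hv2
          exact hqU (Or.inr (Or.inr ⟨W', hT', hq'⟩))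
        · exact huniq v hv hv2 W' hT'
      by_cases hv1 : v = s1
      · subst hv1
        by_cases hu2 : u = s2
        · subst hu2
          exact hqU (Or.inr (Or.inr ⟨W'.reverse, hT'.reverse,
              by rw [Walk.support_reverse, List.mem_reverse]; exact hq'⟩))
        · exact huniq u hu hu2 W'.reverse hT'.reverse
      by_cases hu2 : u = s2
      · subst hu2
        exact huniq2 v hv hv1 W' hT'
      by_cases hv2 : v = s2
      · subst hv2
        exact huniq2 u hu hu1 W'.reverse hT'.reverse
      · have hB1 : ∀ w ∈ W'.support, ¬ G.Adj s1 w := by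
          intro w hw
          by_cases hwu : w = u
          · rw [hwu]; exact (hscat s1 hs1 u hu (fun h => hu1 h.symm)).1
          by_cases hwv : w = v
          · rw [hwv]; exact (hscat s1 hs1 v hv (fun h => hv1 h.symm)).1
          · exact fun hadj => no_touch hbad hscat hu hv hs1 (fun h => hu1 h.symm)
              (fun h => hv1 h.symm) hT' hw hwu hwv hadj
        have hB2 : ∀ w ∈ Wx.support, ¬ G.Adj u w := by
          intro w hw
          by_cases hw1 : w = s1
          · rw [hw1]; exact (hscat u hu s1 hs1 hu1).1
          by_cases hw2 : w = s2
          · rw [hw2]; exact (hscat u hu s2 hs2 hu2).1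
          · exact fun hadj => no_touch hbad hscat hs1 hs2 hu hu1 hu2 hTx hw hw1 hw2 hadj
        obtain ⟨Z, hZ⟩ := cross hTx hxm hp1 hT' hq' hqu hpq hB1 hB2
          (fun h => hu1 h.symm) (hscat s1 hs1 u hu (fun h => hu1 h.symm)).1
        exact huniq u hu hu2 Z hZ

end TollAux

namespace TollAux

variable {V : Type*} {G : SimpleGraph V}

lemma tollset_univ (G : SimpleGraph V) : IsTollSet G Set.univ := by
  intro x
  exact ⟨x, trivial, x, trivial, Walk.nil, Or.inl ⟨rfl, rfl⟩, by simp⟩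

lemma tn_spec [Fintype V] (G : SimpleGraph V) :
    ∃ S : Set V, S.Finite ∧ S.ncard = tollNumber G ∧ IsTollSet G S := by
  have hne : {n | ∃ S : Set V, S.Finite ∧ S.ncard = n ∧ IsTollSet G S}.Nonempty :=
    ⟨(Set.univ : Set V).ncard, Set.univ, Set.finite_univ, rfl, tollset_univ G⟩
  obtain ⟨S, h1, h2, h3⟩ := Nat.sInf_mem hne
  exact ⟨S, h1, h2, h3⟩

lemma tn_le (G : SimpleGraph V) (T : Set V) (hfin : T.Finite) (htoll : IsTollSet G T) :
    tollNumber G ≤ T.ncard :=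
  Nat.sInf_le ⟨T, hfin, rfl, htoll⟩

lemma two_le_tn [Fintype V] [Nontrivial V] (G : SimpleGraph V) : 2 ≤ tollNumber G := by
  obtain ⟨S, hfin, hcard, htoll⟩ := tn_spec G
  by_contra hcon
  push_neg at hcon
  have hle : S.ncard ≤ 1 := by omega
  rcases Nat.lt_or_ge S.ncard 1 with h0 | h1
  · have : S = ∅ := (Set.ncard_eq_zero hfin).1 (by omega)
    obtain ⟨u, hu, -⟩ := htoll (Classical.arbitrary V)
    rw [this] at hu
    exact hu
  · have hone : S.ncard = 1 := le_antisymm hle h1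
    obtain ⟨a, rfl⟩ := Set.ncard_eq_one.1 hone
    obtain ⟨x, hxa⟩ := exists_ne a
    obtain ⟨u, hu, v, hv, Wk, hW, hxs⟩ := htoll x
    rw [Set.mem_singleton_iff] at hu hv
    rcases hW with ⟨-, hlen⟩ | ⟨hadj, -⟩ | ⟨-, hne', -⟩
    · have hls := Wk.length_support
      rw [hlen] at hls
      obtain ⟨z, hz⟩ := List.length_eq_one_iff.1 hls
      have hz1 : u = z := by
        have := Wk.start_mem_support
        rw [hz] at this
        simpa using this
      rw [hz] at hxs
      simp at hxs
      exact hxa ((hxs.trans hz1.symm).trans hu)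
    · rw [hu, hv] at hadj
      exact hadj.ne rfl
    · rw [hu, hv] at hne'
      exact hne' rfl

lemma lift {α β : Type*} {G : SimpleGraph α} {H : SimpleGraph β}
    {u v x : α} {h1 : β} (c : β) {Wk : G.Walk u v} (hT : TW Wk)
    (hx : x ∈ Wk.support) (hxu : x ≠ u) (hxv : x ≠ v) :
    (x, c) ∈ tollInterval (lexProd G H) (u, h1) (v, h1) := by
  classical
  let g : α → α × β := fun p => (p, if p = x then c else h1)
  let f : G →g lexProd G H := ⟨g, fun hab => Or.inl hab⟩
  have hfeq : ∀ p, f p = (p, if p = x then c else h1) := fun p => rfl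
  have hfu : f u = (u, h1) := by rw [hfeq, if_neg (fun h => hxu h.symm)]
  have hfv : f v = (v, h1) := by rw [hfeq, if_neg (fun h => hxv h.symm)]
  have hgd : ∀ i, (List.map (⇑f) Wk.support).getD i (u, h1) = f (Wk.support.getD i u) :=
    fun i => by rw [← hfu]; exact List.getD_map _ _ _
  refine ⟨(Wk.map f).copy hfu hfv, Or.inr (Or.inr ⟨?_, ?_, ?_, ?_, ?_⟩), ?_⟩
  · rintro (h | ⟨h, hh⟩)
    · exact hT.nadj h
    · exact hT.ne h
  · intro h; exact hT.ne (congrArg Prod.fst h)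
  · rw [Walk.length_copy, Walk.length_map]; exact hT.two_le
  · intro i h0 hi
    rw [Walk.length_copy, Walk.length_map] at hi
    rw [Walk.support_copy, Walk.support_map, hgd]
    have hcond := hT.2.2.2.1 i h0 hi
    constructor
    · rintro (h | ⟨he, hh⟩)
      · exact hcond.1 h
      · exfalso
        have he' : u = Wk.support.getD i u := by
          rw [hfeq] at he; exact he
        have hh' : H.Adj h1 (if Wk.support.getD i u = x then c else h1) := by
          rw [hfeq] at hh; exact hh
        by_cases hpx : Wk.support.getD i u = x
        · exact hxu (he'.trans hpx).symm
        · rw [if_neg hpx] at hh'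
          exact H.irrefl hh'
    · intro h
      exact Or.inl (hcond.2 h)
  · intro i h0 hi
    rw [Walk.length_copy, Walk.length_map] at hi
    rw [Walk.length_copy, Walk.length_map, Walk.support_copy, Walk.support_map, hgd]
    have hcond := hT.2.2.2.2 i h0 hi
    constructor
    · rintro (h | ⟨he, hh⟩)
      · exact hcond.1 h
      · exfalso
        have he' : v = Wk.support.getD i u := by
          rw [hfeq] at he; exact he
        have hh' : H.Adj h1 (if Wk.support.getD i u = x then c else h1) := by
          rw [hfeq] at hh; exact hh
        by_cases hpx : Wk.support.getD i u = x
        · exact hxv (he'.trans hpx).symm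
        · rw [if_neg hpx] at hh'
          exact H.irrefl hh'
    · intro h
      exact Or.inl (hcond.2 h)
  · rw [Walk.support_copy, Walk.support_map]
    refine List.mem_map.2 ⟨x, hx, ?_⟩
    rw [hfeq, if_pos rfl]

lemma hub {α β : Type*} {G : SimpleGraph α} {H : SimpleGraph β}
    {d s : α} {h1 h2 : β} (hds : G.Adj d s) (hne : h1 ≠ h2) (hnadj : ¬ H.Adj h1 h2)
    (c : β) : (s, c) ∈ tollInterval (lexProd G H) (d, h1) (d, h2) := by
  have a1 : (lexProd G H).Adj (d, h1) (s, c) := Or.inl hds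
  have a2 : (lexProd G H).Adj (s, c) (d, h2) := Or.inl hds.symm
  refine ⟨Walk.cons a1 (Walk.cons a2 Walk.nil), Or.inr (Or.inr ⟨?_, ?_, ?_, ?_, ?_⟩), ?_⟩
  · rintro (h | ⟨-, hh⟩)
    · exact G.irrefl h
    · exact hnadj hh
  · intro h; exact hne (congrArg Prod.snd h)
  · simp
  · intro i h0 hi
    simp only [Walk.length_cons, Walk.length_nil] at hi
    have hone : i = 1 := by omega
    subst hone
    simp only [Walk.support_cons, Walk.support_nil, List.getD_cons_succ, List.getD_cons_zero]
    exact iff_of_true a1 (by norm_num)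
  · intro i h0 hi
    simp only [Walk.length_cons, Walk.length_nil] at hi
    have hone : i = 1 := by omega
    subst hone
    simp only [Walk.support_cons, Walk.support_nil, List.getD_cons_succ, List.getD_cons_zero,
      Walk.length_cons, Walk.length_nil]
    exact iff_of_true a2.symm (by norm_num)
  · simp [Walk.support_cons]

lemma ncard_prod_singleton {α β : Type*} (A : Set α) (b : β) :
    (A ×ˢ ({b} : Set β)).ncard = A.ncard := by
  have himg : A ×ˢ ({b} : Set β) = (fun a => (a, b)) '' A := by
    ext ⟨p, q⟩
    simp only [Set.mem_prod, Set.mem_singleton_iff, Set.mem_image]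
    constructor
    · rintro ⟨hp, rfl⟩; exact ⟨p, hp, rfl⟩
    · rintro ⟨a, ha, heq⟩
      cases heq
      exact ⟨ha, rfl⟩
  rw [himg, Set.ncard_image_of_injective _ (fun a a' h => congrArg Prod.fst h)]

end TollAux


open TollAux

theorem stmt16 {V W : Type*} [Fintype V] [Fintype W] [Nontrivial V] [Nontrivial W]
    (G : SimpleGraph V) (H : SimpleGraph W)
    (hGc : G.Connected) (hHc : H.Connected) (hH : H ≠ ⊤)
    (heq : tollNumber (lexProd G H) = 3 * tollNumber G) :
    tollNumber G = 2 := by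
  classical
  have hk2 : 2 ≤ tollNumber G := two_le_tn G
  by_contra hne2
  have hk3 : 3 ≤ tollNumber G := by omega
  obtain ⟨S, hSfin, hScard, hStoll⟩ := tn_spec G
  obtain ⟨a, b, hab, hnadjH⟩ : ∃ a b : W, a ≠ b ∧ ¬ H.Adj a b := by
    by_contra hcon
    push_neg at hcon
    apply hH
    ext x y
    rw [SimpleGraph.top_adj]
    exact ⟨fun h => h.ne, fun h => hcon x y h⟩
  have hnbr : ∀ z : V, ∃ w', G.Adj z w' := by
    intro z
    obtain ⟨z', hz'⟩ := exists_ne z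
    obtain ⟨P⟩ := hGc.preconnected z z'
    cases P with
    | nil => exact absurd rfl hz'
    | cons h q => exact ⟨_, h⟩
  have key : ∀ D : Set V, D.Finite →
      (∀ s ∈ S, (∀ u ∈ S, ∀ v ∈ S, s ∈ tollInterval G u v → s = u ∨ s = v) →
        ∃ d ∈ D, G.Adj s d) →
      tollNumber (lexProd G H) ≤ S.ncard + (D.ncard + (D \ S).ncard) := by
    intro D hDfin hhub
    set T : Set (V × W) := (S ×ˢ ({a} : Set W)) ∪
      ((D ×ˢ ({b} : Set W)) ∪ ((D \ S) ×ˢ ({a} : Set W))) with hTdef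
    have hTfin : T.Finite :=
      (hSfin.prod (Set.finite_singleton a)).union
        ((hDfin.prod (Set.finite_singleton b)).union
          (hDfin.diff.prod (Set.finite_singleton a)))
    have hTtoll : IsTollSet (lexProd G H) T := by
      rintro ⟨x, c⟩
      by_cases hx : ∃ u ∈ S, ∃ v ∈ S, x ∈ tollInterval G u v ∧ x ≠ u ∧ x ≠ v
      · obtain ⟨u, hu, v, hv, hmem, hxu, hxv⟩ := hx
        obtain ⟨Wk, hTW, hxs⟩ := tolled_destruct hmem hxu hxv
        exact ⟨(u, a), Or.inl ⟨hu, rfl⟩, (v, a), Or.inl ⟨hv, rfl⟩,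
          lift c hTW hxs hxu hxv⟩
      · have hxS : x ∈ S := by
          by_contra hxS
          obtain ⟨u, hu, v, hv, hmem⟩ := hStoll x
          exact hx ⟨u, hu, v, hv, hmem, fun h => hxS (h ▸ hu), fun h => hxS (h ▸ hv)⟩
        have hbadx : ∀ u ∈ S, ∀ v ∈ S, x ∈ tollInterval G u v → x = u ∨ x = v := by
          intro u hu v hv hmem
          by_contra hcon
          push_neg at hcon
          exact hx ⟨u, hu, v, hv, hmem, hcon.1, hcon.2⟩
        obtain ⟨d, hd, hadj⟩ := hhub x hxS hbadx
        refine ⟨(d, a), ?_, (d, b), Or.inr (Or.inl ⟨hd, rfl⟩),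
          hub hadj.symm hab hnadjH c⟩
        by_cases hdS : d ∈ S
        · exact Or.inl ⟨hdS, rfl⟩
        · exact Or.inr (Or.inr ⟨⟨hd, hdS⟩, rfl⟩)
    refine (tn_le _ T hTfin hTtoll).trans ?_
    calc T.ncard ≤ (S ×ˢ ({a} : Set W)).ncard
          + ((D ×ˢ ({b} : Set W)) ∪ ((D \ S) ×ˢ ({a} : Set W))).ncard :=
        Set.ncard_union_le _ _
      _ ≤ (S ×ˢ ({a} : Set W)).ncard
          + ((D ×ˢ ({b} : Set W)).ncard + ((D \ S) ×ˢ ({a} : Set W)).ncard) :=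
        Nat.add_le_add_left (Set.ncard_union_le _ _) _
      _ = S.ncard + (D.ncard + (D \ S).ncard) := by
        rw [ncard_prod_singleton, ncard_prod_singleton, ncard_prod_singleton]
  by_cases hAcase : (∃ s ∈ S, ∃ u ∈ S, ∃ v ∈ S, s ∈ tollInterval G u v ∧ s ≠ u ∧ s ≠ v)
      ∨ (∃ s ∈ S, ∃ t ∈ S, s ≠ t ∧ (G.Adj s t ∨ ∃ w', G.Adj s w' ∧ G.Adj t w'))
  · choose nb hnb using hnbr
    obtain ⟨D, hDfin, hhub, hsize⟩ : ∃ D : Set V, D.Finite ∧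
        (∀ s ∈ S, (∀ u ∈ S, ∀ v ∈ S, s ∈ tollInterval G u v → s = u ∨ s = v) →
          ∃ d ∈ D, G.Adj s d) ∧
        D.ncard + (D \ S).ncard + 2 ≤ 2 * S.ncard := by
      have hk' : 3 ≤ S.ncard := by rw [hScard]; omega
      rcases hAcase with ⟨s0, hs0, u0, hu0, v0, hv0, hmem0, hne0u, hne0v⟩ |
        ⟨s, hsS, t, htS, hst, hclose⟩
      · refine ⟨nb '' (S \ {s0}), hSfin.diff.image nb, ?_, ?_⟩
        · intro s' hs' hbads'
          have hs0ne : s' ≠ s0 := by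
            intro h
            subst h
            rcases hbads' u0 hu0 v0 hv0 hmem0 with h | h
            · exact hne0u h
            · exact hne0v h
          exact ⟨nb s', ⟨s', ⟨hs', hs0ne⟩, rfl⟩, hnb s'⟩
        · have h1 : (nb '' (S \ {s0})).ncard ≤ (S \ {s0}).ncard :=
            Set.ncard_image_le hSfin.diff
          have h2 : (S \ {s0}).ncard = S.ncard - 1 :=
            Set.ncard_diff_singleton_of_mem hs0
          have h3 : ((nb '' (S \ {s0})) \ S).ncard ≤ (nb '' (S \ {s0})).ncard :=
            Set.ncard_le_ncard Set.diff_subset (hSfin.diff.image nb)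
          omega
      · have hsub : ({s, t} : Set V) ⊆ S := by
          rintro z (rfl | rfl)
          · exact hsS
          · exact htS
        have hdiffcard : (S \ {s, t}).ncard = S.ncard - 2 := by
          rw [Set.ncard_diff hsub (Set.toFinite _), Set.ncard_pair hst]
        have himgcard : (nb '' (S \ {s, t})).ncard ≤ S.ncard - 2 := by
          rw [← hdiffcard]
          exact Set.ncard_image_le hSfin.diff
        have himgfin : (nb '' (S \ {s, t})).Finite := hSfin.diff.image nb
        rcases hclose with hadj | ⟨w0, hw1, hw2⟩
        · refine ⟨(nb '' (S \ {s, t})) ∪ {s, t},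
            himgfin.union (Set.toFinite _), ?_, ?_⟩
          · intro s' hs' _
            by_cases h's : s' = s
            · exact ⟨t, Or.inr (Or.inr rfl), h's ▸ hadj⟩
            by_cases h't : s' = t
            · exact ⟨s, Or.inr (Or.inl rfl), h't ▸ hadj.symm⟩
            · exact ⟨nb s', Or.inl ⟨s', ⟨hs', by simp [h's, h't]⟩, rfl⟩, hnb s'⟩
          · have h1 : ((nb '' (S \ {s, t})) ∪ {s, t}).ncard ≤
                (nb '' (S \ {s, t})).ncard + 2 := by
              have := Set.ncard_union_le (nb '' (S \ {s, t})) ({s, t} : Set V)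
              rw [Set.ncard_pair hst] at this
              exact this
            have h2 : (((nb '' (S \ {s, t})) ∪ {s, t}) \ S).ncard ≤
                (nb '' (S \ {s, t})).ncard := by
              apply Set.ncard_le_ncard _ himgfin
              rintro z ⟨hzD, hzS⟩
              rcases hzD with h | h
              · exact h
              · exact absurd (hsub h) hzS
            omega
        · refine ⟨(nb '' (S \ {s, t})) ∪ {w0},
            himgfin.union (Set.finite_singleton _), ?_, ?_⟩
          · intro s' hs' _
            by_cases h's : s' = s
            · exact ⟨w0, Or.inr rfl, h's ▸ hw1⟩
            by_cases h't : s' = t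
            · exact ⟨w0, Or.inr rfl, h't ▸ hw2⟩
            · exact ⟨nb s', Or.inl ⟨s', ⟨hs', by simp [h's, h't]⟩, rfl⟩, hnb s'⟩
          · have h1 : ((nb '' (S \ {s, t})) ∪ {w0}).ncard ≤
                (nb '' (S \ {s, t})).ncard + 1 := by
              have := Set.ncard_union_le (nb '' (S \ {s, t})) ({w0} : Set V)
              rw [Set.ncard_singleton] at this
              exact this
            have h2 : (((nb '' (S \ {s, t})) ∪ {w0}) \ S).ncard ≤
                ((nb '' (S \ {s, t})) ∪ {w0}).ncard :=
              Set.ncard_le_ncard Set.diff_subset (himgfin.union (Set.finite_singleton _))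
            omega
    have hfinal := key D hDfin hhub
    rw [heq] at hfinal
    omega
  · push_neg at hAcase
    obtain ⟨hgood, hclose⟩ := hAcase
    have hbad : ∀ s ∈ S, ∀ u ∈ S, ∀ v ∈ S, s ∈ tollInterval G u v → s = u ∨ s = v := by
      intro s hs u hu v hv hmem
      by_cases h : s = u
      · exact Or.inl h
      · exact Or.inr (hgood s hs u hu v hv hmem h)
    have hscat : ∀ s ∈ S, ∀ t ∈ S, s ≠ t →
        ¬ G.Adj s t ∧ ∀ w', ¬(G.Adj s w' ∧ G.Adj t w') := by
      intro s hs t ht hst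
      have h := hclose s hs t ht hst
      exact ⟨h.1, fun w' hw => (h.2 w' hw.1) hw.2⟩
    exact caseB hStoll hbad hscat hnbr hGc.preconnected (by rw [hScard]; omega)
end
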